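/- Suppose the CutWidth W of the graph satisfies W ≥ Δ. Then for any bag A with γ(A) < W, one has W ≤ (n − |A|)·Δ. -/

import Mathlib

open Finset

variable {V : Type*} [Fintype V] [DecidableEq V]

/-- The cut of a bag `A`: the number of edges of `G` with exactly one endpoint in `A`. -/
def cut (G : SimpleGraph V) [DecidableRel G.Adj] (A : Finset V) : ℕ :=
  ((A ×ˢ Aᶜ).filter fun p => G.Adj p.1 p.2).card

/-- An `(A–B)`-crusade of length `k+1`: a sequence of bags starting at `A`, ending at `B`,
removing at most one node at each step. -/
def IsCrusade (A B : Finset V) (k : ℕ) (ω : ℕ → Finset V) : Prop :=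
  ω 0 = A ∧ ω k = B ∧ ∀ i < k, (ω i \ ω (i + 1)).card ≤ 1

/-- The width of a crusade: the maximum cut encountered after the first bag. -/
def width (G : SimpleGraph V) [DecidableRel G.Adj] (k : ℕ) (ω : ℕ → Finset V) : ℕ :=
  (Finset.Icc 1 k).sup fun i => cut G (ω i)

/-- The resilience of a bag `A`: the minimum width over all `(A–∅)`-crusades. -/
noncomputable def resilience (G : SimpleGraph V) [DecidableRel G.Adj] (A : Finset V) : ℕ :=
  sInf {w | ∃ (k : ℕ) (ω : ℕ → Finset V), IsCrusade A ∅ k ω ∧ width G k ω = w}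

/-- A crusade is monotone if each bag contains the next. -/
def IsMonotone (k : ℕ) (ω : ℕ → Finset V) : Prop :=
  ∀ i < k, ω (i + 1) ⊆ ω i

/-- The CutWidth of `G`: the minimum width over all monotone `(V–∅)`-crusades. -/
noncomputable def cutWidth (G : SimpleGraph V) [DecidableRel G.Adj] : ℕ :=
  sInf {w | ∃ (k : ℕ) (ω : ℕ → Finset V),
    IsCrusade Finset.univ ∅ k ω ∧ IsMonotone k ω ∧ width G k ω = w}


set_option linter.unusedSectionVars false

lemma cut_eq_sum (G : SimpleGraph V) [DecidableRel G.Adj] (A : Finset V) :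
    cut G A = ∑ p : V × V, (if p.1 ∈ A ∧ p.2 ∉ A ∧ G.Adj p.1 p.2 then 1 else 0) := by
  rw [cut]
  have h : (A ×ˢ Aᶜ).filter (fun p => G.Adj p.1 p.2)
      = Finset.univ.filter (fun p : V × V => p.1 ∈ A ∧ p.2 ∉ A ∧ G.Adj p.1 p.2) := by
    ext p
    simp [Finset.mem_product, and_assoc]
  rw [h, Finset.card_filter]

lemma cut_submodular (G : SimpleGraph V) [DecidableRel G.Adj] (X Y : Finset V) :
    cut G (X ∩ Y) + cut G (X ∪ Y) ≤ cut G X + cut G Y := by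
  simp only [cut_eq_sum, ← Finset.sum_add_distrib]
  apply Finset.sum_le_sum
  intro p _
  by_cases h1 : p.1 ∈ X <;> by_cases h2 : p.2 ∈ X <;> by_cases h3 : p.1 ∈ Y <;>
    by_cases h4 : p.2 ∈ Y <;> by_cases h5 : G.Adj p.1 p.2 <;>
    simp [h1, h2, h3, h4, h5]

lemma cut_le_compl_card_mul (G : SimpleGraph V) [DecidableRel G.Adj] (A : Finset V) :
    cut G A ≤ Aᶜ.card * G.maxDegree := by
  rw [cut]
  have h : ((A ×ˢ Aᶜ).filter fun p => G.Adj p.1 p.2).card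
      = ∑ v ∈ Aᶜ, (((A ×ˢ Aᶜ).filter fun p => G.Adj p.1 p.2).filter
          (fun p => p.2 = v)).card := by
    apply Finset.card_eq_sum_card_fiberwise
    intro p hp
    simp only [Finset.mem_coe, Finset.mem_filter, Finset.mem_product] at hp
    exact hp.1.2
  rw [h]
  calc ∑ v ∈ Aᶜ, (((A ×ˢ Aᶜ).filter fun p => G.Adj p.1 p.2).filter (fun p => p.2 = v)).card
      ≤ ∑ v ∈ Aᶜ, G.maxDegree := by
        apply Finset.sum_le_sum
        intro v _
        have hle : (((A ×ˢ Aᶜ).filter fun p => G.Adj p.1 p.2).filter (fun p => p.2 = v)).card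
            ≤ (G.neighborFinset v).card := by
          apply Finset.card_le_card_of_injOn (fun p => p.1)
          · intro p hp
            simp only [Finset.mem_coe, Finset.mem_filter, Finset.mem_product] at hp
            rw [Finset.mem_coe, SimpleGraph.mem_neighborFinset]
            exact (hp.2 ▸ hp.1.2).symm
          · intro p hp q hq hpq
            simp only [Finset.mem_coe, Finset.mem_filter] at hp hq
            exact Prod.ext hpq (hp.2.trans hq.2.symm)
        exact hle.trans (G.degree_le_maxDegree v)
    _ = Aᶜ.card * G.maxDegree := by rw [Finset.sum_const, smul_eq_mul]

lemma cut_le_width (G : SimpleGraph V) [DecidableRel G.Adj] {k : ℕ} (ω : ℕ → Finset V)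
    {i : ℕ} (h1 : 1 ≤ i) (h2 : i ≤ k) : cut G (ω i) ≤ width G k ω := by
  have := Finset.le_sup (f := fun i => cut G (ω i)) (Finset.mem_Icc.2 ⟨h1, h2⟩)
  simpa [width] using this

lemma width_le_iff (G : SimpleGraph V) [DecidableRel G.Adj] {k : ℕ} {ω : ℕ → Finset V}
    {w : ℕ} : width G k ω ≤ w ↔ ∀ i, 1 ≤ i → i ≤ k → cut G (ω i) ≤ w := by
  rw [width, Finset.sup_le_iff]
  constructor
  · intro h i h1 h2; exact h i (Finset.mem_Icc.2 ⟨h1, h2⟩)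
  · intro h i hi; rcases Finset.mem_Icc.1 hi with ⟨h1, h2⟩; exact h i h1 h2

/-- Peeling off elements of `B \ C` one at a time gives a crusade from `B` to `C`. -/
lemma exists_peel_crusade (C : Finset V) : ∀ (B : Finset V), C ⊆ B →
    ∃ k ω, IsCrusade B C k ω ∧ ∀ i ≤ k, C ⊆ ω i ∧ ω i ⊆ B := by
  have key : ∀ (n : ℕ) (B : Finset V), (B \ C).card = n → C ⊆ B →
      ∃ k ω, IsCrusade B C k ω ∧ ∀ i ≤ k, C ⊆ ω i ∧ ω i ⊆ B := by
    intro n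
    induction n with
    | zero =>
      intro B hcard hsub
      have hBC : B = C := by
        apply Finset.Subset.antisymm _ hsub
        intro x hx
        by_contra hxc
        have hmem : x ∈ B \ C := Finset.mem_sdiff.2 ⟨hx, hxc⟩
        rw [Finset.card_eq_zero] at hcard
        rw [hcard] at hmem
        exact absurd hmem (Finset.notMem_empty x)
      subst hBC
      exact ⟨0, fun _ => B, ⟨rfl, rfl, fun i hi => absurd hi (Nat.not_lt_zero i)⟩,
        fun i _ => ⟨Finset.Subset.refl _, Finset.Subset.refl _⟩⟩
    | succ n ih =>
      intro B hcard hsub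
      have hne : (B \ C).Nonempty := by rw [← Finset.card_pos, hcard]; omega
      obtain ⟨x, hx⟩ := hne
      rcases Finset.mem_sdiff.1 hx with ⟨hxB, hxC⟩
      have hsub' : C ⊆ B.erase x := fun y hy =>
        Finset.mem_erase.2 ⟨fun h => hxC (h ▸ hy), hsub hy⟩
      have hcard' : (B.erase x \ C).card = n := by
        have he : B.erase x \ C = (B \ C).erase x := by
          ext y; simp [Finset.mem_erase, Finset.mem_sdiff, and_assoc, and_comm, and_left_comm]
        rw [he, Finset.card_erase_of_mem hx, hcard]
        omega
      obtain ⟨k, ω, hω, hbound⟩ := ih (B.erase x) hcard' hsub'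
      have h2 : B \ B.erase x ⊆ {x} := by
        intro y hy
        rcases Finset.mem_sdiff.1 hy with ⟨hyB, hyE⟩
        rw [Finset.mem_singleton]
        by_contra hne
        exact hyE (Finset.mem_erase.2 ⟨hne, hyB⟩)
      refine ⟨k + 1, fun i => if i = 0 then B else ω (i - 1), ⟨by simp, ?_, ?_⟩, ?_⟩
      · simp [hω.2.1]
      · intro i hi
        dsimp only
        by_cases hi0 : i = 0
        · subst hi0
          simp only [if_pos rfl, if_neg (by omega : (0:ℕ) + 1 ≠ 0)]
          have e : (0:ℕ) + 1 - 1 = 0 := rfl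
          rw [e, hω.1]
          calc (B \ B.erase x).card ≤ ({x} : Finset V).card := Finset.card_le_card h2
            _ = 1 := Finset.card_singleton x
        · have h1 : i - 1 < k := by omega
          have e1 : i + 1 - 1 = (i - 1) + 1 := by omega
          simp only [if_neg hi0, if_neg (by omega : i + 1 ≠ 0), e1]
          exact hω.2.2 (i - 1) h1
      · intro i hi
        dsimp only
        by_cases hi0 : i = 0
        · simp [hi0, hsub]
        · simp only [if_neg hi0]
          obtain ⟨ha, hb⟩ := hbound (i - 1) (by omega)
          exact ⟨ha, hb.trans (Finset.erase_subset x B)⟩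
  intro B hsub
  exact key (B \ C).card B rfl hsub

/-- Concatenation of crusades. -/
lemma crusade_concat (G : SimpleGraph V) [DecidableRel G.Adj] {A B C : Finset V}
    {k₁ k₂ : ℕ} {ω₁ ω₂ : ℕ → Finset V}
    (h₁ : IsCrusade A B k₁ ω₁) (h₂ : IsCrusade B C k₂ ω₂) :
    ∃ ω, IsCrusade A C (k₁ + k₂) ω ∧
      width G (k₁ + k₂) ω ≤ max (width G k₁ ω₁) (width G k₂ ω₂) := by
  refine ⟨fun i => if i ≤ k₁ then ω₁ i else ω₂ (i - k₁), ⟨by simp [h₁.1], ?_, ?_⟩, ?_⟩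
  · dsimp only
    by_cases h : k₂ = 0
    · subst h
      simp only [Nat.add_zero, if_pos (le_refl k₁), h₁.2.1]
      rw [← h₂.1, h₂.2.1]
    · rw [if_neg (by omega), Nat.add_sub_cancel_left, h₂.2.1]
  · intro j hj
    dsimp only
    by_cases hj1 : j + 1 ≤ k₁
    · rw [if_pos (by omega), if_pos hj1]
      exact h₁.2.2 j (by omega)
    · by_cases hj2 : j ≤ k₁
      · have hjk : j = k₁ := by omega
        subst hjk
        rw [if_pos (le_refl _), if_neg hj1, h₁.2.1, Nat.add_sub_cancel_left, ← h₂.1]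
        exact h₂.2.2 0 (by omega)
      · rw [if_neg hj2, if_neg (by omega)]
        have e : j + 1 - k₁ = (j - k₁) + 1 := by omega
        rw [e]
        exact h₂.2.2 (j - k₁) (by omega)
  · rw [width_le_iff]
    intro i hi1 hi2
    by_cases h : i ≤ k₁
    · rw [if_pos h]
      exact le_max_of_le_left (cut_le_width G ω₁ hi1 h)
    · rw [if_neg h]
      exact le_max_of_le_right (cut_le_width G ω₂ (by omega) (by omega))

/-- Summing a function of the bags after updating one bag. -/
lemma sum_update_eq (f : Finset V → ℕ) (ω : ℕ → Finset V) (k i : ℕ) (hi : i ≤ k)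
    (Z : Finset V) :
    (∑ j ∈ Finset.range (k + 1), f (Function.update ω i Z j)) + f (ω i)
      = (∑ j ∈ Finset.range (k + 1), f (ω j)) + f Z := by
  have hmem : i ∈ Finset.range (k + 1) := Finset.mem_range.2 (by omega)
  have h1 : (fun j => f (Function.update ω i Z j)) = Function.update (fun j => f (ω j)) i (f Z) := by
    funext j
    by_cases h : j = i
    · subst h; simp [Function.update_self]
    · simp [Function.update_of_ne h]
  rw [h1, Finset.sum_update_of_mem hmem]
  rw [← Finset.add_sum_erase _ _ hmem, Finset.sdiff_singleton_eq_erase]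
  ring

set_option maxHeartbeats 1000000 in
/-- Monotonization: any `(univ–∅)`-crusade of width `≤ w` can be made monotone. -/
theorem exists_monotone_crusade (G : SimpleGraph V) [DecidableRel G.Adj] {w : ℕ}
    (h : ∃ k ω, IsCrusade (Finset.univ : Finset V) ∅ k ω ∧ width G k ω ≤ w) :
    ∃ k ω, IsCrusade (Finset.univ : Finset V) ∅ k ω ∧ IsMonotone k ω ∧ width G k ω ≤ w := by
  classical
  set P : ℕ → (ℕ → Finset V) → Prop :=
    fun k ω => IsCrusade (Finset.univ : Finset V) ∅ k ω ∧ width G k ω ≤ w with hP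
  set S1 : Set ℕ := {s | ∃ k ω, P k ω ∧ ∑ j ∈ Finset.range (k + 1), cut G (ω j) = s} with hS1
  have hS1ne : S1.Nonempty := by
    obtain ⟨k, ω, h1, h2⟩ := h
    exact ⟨_, k, ω, ⟨h1, h2⟩, rfl⟩
  set s₀ := sInf S1 with hs₀
  have hs₀mem : s₀ ∈ S1 := Nat.sInf_mem hS1ne
  set S2 : Set ℕ := {t | ∃ k ω, P k ω ∧ (∑ j ∈ Finset.range (k + 1), cut G (ω j) = s₀) ∧
      ∑ j ∈ Finset.range (k + 1), (ω j).card = t} with hS2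
  have hS2ne : S2.Nonempty := by
    obtain ⟨k, ω, h1, h2⟩ := hs₀mem
    exact ⟨_, k, ω, h1, h2, rfl⟩
  obtain ⟨k, ω, ⟨hcru, hwid⟩, hsum, hcardsum⟩ := Nat.sInf_mem hS2ne
  refine ⟨k, ω, hcru, ?_, hwid⟩
  intro i hik
  by_contra hsub
  -- basic facts
  have hi0 : i ≠ 0 := by
    intro h0
    apply hsub
    rw [h0, hcru.1]
    exact Finset.subset_univ _
  have hYne : ω (i + 1) ≠ ∅ := by
    intro h0
    apply hsub
    rw [h0]
    exact Finset.empty_subset _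
  have hik1 : i + 1 ≠ k := by
    intro h0
    exact hYne (h0 ▸ hcru.2.1)
  have hik1' : i + 1 < k := by omega
  set X := ω i with hX
  set Y := ω (i + 1) with hY
  by_cases hcase : cut G (X ∪ Y) < cut G X
  · -- replace ω i by X ∪ Y : strictly decreases the cut-sum
    set ω' := Function.update ω i (X ∪ Y) with hω'
    have hcru' : IsCrusade (Finset.univ : Finset V) ∅ k ω' := by
      refine ⟨?_, ?_, ?_⟩
      · rw [hω', Function.update_of_ne (Ne.symm hi0), hcru.1]
      · rw [hω', Function.update_of_ne (by omega : k ≠ i), hcru.2.1]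
      · intro j hj
        by_cases hji : j = i
        · subst hji
          rw [hω', Function.update_self, Function.update_of_ne (by omega : j + 1 ≠ j)]
          have : (X ∪ Y) \ ω (j + 1) = X \ ω (j + 1) := by
            rw [Finset.union_sdiff_distrib]
            have : Y \ ω (j + 1) = ∅ := Finset.sdiff_eq_empty_iff_subset.2 (by rw [← hY])
            rw [this, Finset.union_empty]
          rw [this]
          exact hcru.2.2 j hj
        · by_cases hji1 : j + 1 = i
          · rw [hω', Function.update_of_ne hji, hji1, Function.update_self]
            have hs : ω j \ (X ∪ Y) ⊆ ω j \ X := Finset.sdiff_subset_sdiff (le_refl _)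
              (Finset.subset_union_left)
            refine le_trans (Finset.card_le_card hs) ?_
            rw [hX, ← hji1]
            exact hcru.2.2 j hj
          · rw [hω', Function.update_of_ne hji, Function.update_of_ne hji1]
            exact hcru.2.2 j hj
    have hwid' : width G k ω' ≤ w := by
      rw [width_le_iff G]
      intro j h1 h2
      by_cases hji : j = i
      · subst hji
        rw [hω', Function.update_self]
        exact le_trans (le_of_lt hcase) (le_trans (cut_le_width G ω h1 h2) hwid)
      · rw [hω', Function.update_of_ne hji]
        exact le_trans (cut_le_width G ω h1 h2) hwid
    have hsum' := sum_update_eq (fun A => cut G A) ω k i (by omega) (X ∪ Y)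
    have hlt : ∑ j ∈ Finset.range (k + 1), cut G (ω' j) < s₀ := by
      rw [hω']
      have e1 : cut G (ω i) = cut G X := rfl
      omega
    have : s₀ ≤ ∑ j ∈ Finset.range (k + 1), cut G (ω' j) :=
      Nat.sInf_le ⟨k, ω', ⟨hcru', hwid'⟩, rfl⟩
    omega
  · -- replace ω (i+1) by X ∩ Y : cut-sum does not increase, card-sum strictly decreases
    push_neg at hcase
    have hcutXY : cut G (X ∩ Y) ≤ cut G Y := by
      have := cut_submodular G X Y
      omega
    set ω' := Function.update ω (i + 1) (X ∩ Y) with hω'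
    have hcru' : IsCrusade (Finset.univ : Finset V) ∅ k ω' := by
      refine ⟨?_, ?_, ?_⟩
      · rw [hω', Function.update_of_ne (by omega : 0 ≠ i + 1), hcru.1]
      · rw [hω', Function.update_of_ne (by omega : k ≠ i + 1), hcru.2.1]
      · intro j hj
        by_cases hji : j = i + 1
        · rw [hω', hji, Function.update_self,
            Function.update_of_ne (by omega : i + 1 + 1 ≠ i + 1)]
          have hs : (X ∩ Y) \ ω (i + 1 + 1) ⊆ Y \ ω (i + 1 + 1) :=
            Finset.sdiff_subset_sdiff Finset.inter_subset_right (le_refl _)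
          refine le_trans (Finset.card_le_card hs) ?_
          have := hcru.2.2 (i + 1) (by omega)
          rw [hY]
          exact this
        · by_cases hji1 : j + 1 = i + 1
          · have hji' : j = i := by omega
            rw [hω', Function.update_of_ne hji, hji1, Function.update_self, hji']
            have he2 : X \ (X ∩ Y) = X \ Y := by
              ext y; simp only [Finset.mem_sdiff, Finset.mem_inter]; tauto
            have : ω i \ (X ∩ Y) = X \ Y := by rw [← hX]; exact he2
            rw [this, hX, hY]
            exact hcru.2.2 i hik
          · rw [hω', Function.update_of_ne hji, Function.update_of_ne hji1]
            exact hcru.2.2 j hj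
    have hwid' : width G k ω' ≤ w := by
      rw [width_le_iff G]
      intro j h1 h2
      by_cases hji : j = i + 1
      · subst hji
        rw [hω', Function.update_self]
        refine le_trans hcutXY (le_trans ?_ hwid)
        rw [hY]
        exact cut_le_width G ω h1 h2
      · rw [hω', Function.update_of_ne hji]
        exact le_trans (cut_le_width G ω h1 h2) hwid
    have hsum' := sum_update_eq (fun A => cut G A) ω k (i + 1) (by omega) (X ∩ Y)
    have hsle : ∑ j ∈ Finset.range (k + 1), cut G (ω' j) ≤ s₀ := by
      rw [hω']
      have e2 : cut G (ω (i + 1)) = cut G Y := rfl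
      omega
    have hsge : s₀ ≤ ∑ j ∈ Finset.range (k + 1), cut G (ω' j) :=
      Nat.sInf_le ⟨k, ω', ⟨hcru', hwid'⟩, rfl⟩
    have hseq : ∑ j ∈ Finset.range (k + 1), cut G (ω' j) = s₀ := le_antisymm hsle hsge
    -- card sum strictly decreases
    have hcardlt : (X ∩ Y).card < Y.card := by
      apply Finset.card_lt_card
      rw [Finset.ssubset_iff_subset_ne]
      refine ⟨Finset.inter_subset_right, ?_⟩
      intro heq
      apply hsub
      rw [← heq]
      exact Finset.inter_subset_left
    have hcsum' := sum_update_eq (fun A => A.card) ω k (i + 1) (by omega) (X ∩ Y)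
    have hclt : ∑ j ∈ Finset.range (k + 1), (ω' j).card < sInf S2 := by
      rw [hω']
      have e3 : (ω (i + 1)).card = Y.card := rfl
      omega
    have : sInf S2 ≤ ∑ j ∈ Finset.range (k + 1), (ω' j).card :=
      Nat.sInf_le ⟨k, ω', ⟨hcru', hwid'⟩, hseq, rfl⟩
    omega

theorem cutWidth_le_of_resilience_lt (G : SimpleGraph V) [DecidableRel G.Adj]
    (hconn : G.Connected) (hΔ : 0 < G.maxDegree)
    (hW : G.maxDegree ≤ cutWidth G)
    (A : Finset V) (hA : resilience G A < cutWidth G) :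
    cutWidth G ≤ (Fintype.card V - A.card) * G.maxDegree := by
  classical
  -- a crusade witnessing the resilience of A
  have hSne : {w | ∃ (k : ℕ) (ω : ℕ → Finset V), IsCrusade A ∅ k ω ∧ width G k ω = w}.Nonempty := by
    obtain ⟨k, ω, hω, -⟩ := exists_peel_crusade (∅ : Finset V) A (Finset.empty_subset A)
    exact ⟨width G k ω, k, ω, hω, rfl⟩
  obtain ⟨k₂, ω₂, hω₂, hw₂⟩ : resilience G A ∈ _ := Nat.sInf_mem hSne
  -- a crusade from univ to A staying above A
  obtain ⟨k₁, ω₁, hω₁, hb₁⟩ := exists_peel_crusade A Finset.univ (Finset.subset_univ A)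
  have hwid₁ : width G k₁ ω₁ ≤ Aᶜ.card * G.maxDegree := by
    rw [width_le_iff]
    intro i h1 h2
    calc cut G (ω₁ i) ≤ (ω₁ i)ᶜ.card * G.maxDegree := cut_le_compl_card_mul G (ω₁ i)
      _ ≤ Aᶜ.card * G.maxDegree := by
          apply Nat.mul_le_mul_right
          apply Finset.card_le_card
          exact Finset.compl_subset_compl.2 (hb₁ i h2).1
  -- concatenate and monotonize
  obtain ⟨ω₃, hω₃, hwid₃⟩ := crusade_concat G hω₁ hω₂
  have hmono := exists_monotone_crusade G ⟨k₁ + k₂, ω₃, hω₃,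
    le_trans hwid₃ (le_refl _)⟩
  obtain ⟨k, ω, hcru, hmon, hwid⟩ := hmono
  have hcw : cutWidth G ≤ width G k ω := Nat.sInf_le ⟨k, ω, hcru, hmon, rfl⟩
  have hle : cutWidth G ≤ max (width G k₁ ω₁) (width G k₂ ω₂) := le_trans hcw hwid
  rcases le_max_iff.1 hle with h | h
  · refine le_trans h (le_trans hwid₁ ?_)
    rw [Finset.card_compl]
  · rw [hw₂] at h
    exact absurd (lt_of_le_of_lt h hA) (lt_irrefl _)
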